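/- Let n ≥ 1, let V = (ℤ/3)^n, and let G = V ⋊ C₂ be the semidirect product in which the nontrivial element of C₂ acts on V by negation. Then the involutions of G are exactly the elements (v,σ) with σ the nontrivial element of C₂; moreover, for any subgroup W ≤ V of index 3 and H = {(w,σ) : w ∈ W, σ ∈ C₂} ≤ G, and any two involutions t, s ∈ G ∖ H, there exists h ∈ H with h·t·h⁻¹ = s. (This is the very-regularity statement for the maximal parabolic 3^{n−1}:2 in the 3-transposition group 3^n:2.) -/

import Mathlib

/-- The elementary abelian group `3^n`, written multiplicatively. -/
abbrev V3 (n : ℕ) : Type := Multiplicative (Fin n → ZMod 3)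

/-- The inversion (negation) automorphism of `3^n`. -/
def negAut (n : ℕ) : MulAut (V3 n) := MulEquiv.inv (V3 n)

theorem negAut_sq (n : ℕ) : negAut n * negAut n = 1 := by
  ext x
  simp [negAut]

/-- The action of `C₂ = ℤ/2` on `3^n` in which the nontrivial element acts by
negation. -/
def negAction (n : ℕ) : Multiplicative (ZMod 2) →* MulAut (V3 n) where
  toFun a := if Multiplicative.toAdd a = 0 then 1 else negAut n
  map_one' := by simp
  map_mul' a b := by
    have h : ∀ x : ZMod 2, x = 0 ∨ x = 1 := by decide
    have h11 : (1 + 1 : ZMod 2) = 0 := by decide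
    rcases h (Multiplicative.toAdd a) with ha | ha <;>
      rcases h (Multiplicative.toAdd b) with hb | hb <;>
      simp [toAdd_mul, ha, hb, h11, negAut_sq]

theorem negAction_mem (n : ℕ) (W : Subgroup (V3 n)) (a : Multiplicative (ZMod 2))
    (v : V3 n) (hv : v ∈ W) : negAction n a v ∈ W := by
  simp only [negAction, MonoidHom.coe_mk, OneHom.coe_mk]
  split_ifs <;> simp [hv, W.inv_mem hv, negAut]

/-- The "parabolic" subgroup `{(w, σ) : w ∈ W, σ ∈ C₂}` of `3^n : 2` attached to a
subgroup `W ≤ 3^n`. -/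
def parab (n : ℕ) (W : Subgroup (V3 n)) :
    Subgroup (V3 n ⋊[negAction n] Multiplicative (ZMod 2)) where
  carrier := {g | g.left ∈ W}
  one_mem' := by
    show (1 : V3 n ⋊[negAction n] Multiplicative (ZMod 2)).left ∈ W
    simp [W.one_mem]
  mul_mem' := by
    intro a b ha hb
    show (a * b).left ∈ W
    rw [SemidirectProduct.mul_left]
    exact W.mul_mem ha (negAction_mem n W _ _ hb)
  inv_mem' := by
    intro a ha
    show a⁻¹.left ∈ W
    rw [SemidirectProduct.inv_left]
    exact negAction_mem n W _ _ (W.inv_mem ha)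


theorem V3_cube {n : ℕ} (x : V3 n) : x * x * x = 1 := by
  have h : ∀ a : ZMod 3, a + a + a = 0 := by decide
  apply Multiplicative.toAdd.injective
  funext i
  simpa using h (Multiplicative.toAdd x i)

theorem V3_sq_eq_one {n : ℕ} {x : V3 n} (hx : x * x = 1) : x = 1 := by
  have := V3_cube x
  rwa [hx, one_mul] at this

theorem V3_sqrt {n : ℕ} (c : V3 n) : (c * c) * (c * c) = c := by
  rw [← mul_assoc, V3_cube, one_mul]

theorem zmod2_cases : ∀ x : ZMod 2, x = 0 ∨ x = 1 := by decide

theorem negAction_apply_zero {n : ℕ} {a : Multiplicative (ZMod 2)}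
    (ha : Multiplicative.toAdd a = 0) (x : V3 n) : negAction n a x = x := by
  show (if Multiplicative.toAdd a = 0 then 1 else negAut n) x = x
  rw [if_pos ha]; rfl

theorem negAction_apply_one' {n : ℕ} {a : Multiplicative (ZMod 2)}
    (ha : Multiplicative.toAdd a = 1) (x : V3 n) : negAction n a x = x⁻¹ := by
  show (if Multiplicative.toAdd a = 0 then 1 else negAut n) x = x⁻¹
  rw [if_neg (by rw [ha]; decide)]; rfl

theorem invol_right {n : ℕ} (g : V3 n ⋊[negAction n] Multiplicative (ZMod 2))
    (hgg : g * g = 1) (hg : g ≠ 1) : Multiplicative.toAdd g.right = 1 := by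
  rcases zmod2_cases (Multiplicative.toAdd g.right) with h0 | h1
  · exfalso
    apply hg
    have hl : g.left * g.left = 1 := by
      have := congrArg SemidirectProduct.left hgg
      rw [SemidirectProduct.mul_left, negAction_apply_zero h0] at this
      simpa using this
    have hr : g.right = 1 := by
      apply Multiplicative.toAdd.injective
      simpa using h0
    ext : 1
    · simpa using V3_sq_eq_one hl
    · simpa using hr
  · exact h1

theorem coset_cases {n : ℕ} (W : Subgroup (V3 n)) (hW : W.index = 3)
    (v w : V3 n) (hv : v ∉ W) (hw : w ∉ W) : w * v⁻¹ ∈ W ∨ w * v ∈ W := by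
  set Q := V3 n ⧸ W
  have hcard : Nat.card Q = 3 := by rw [← Subgroup.index_eq_card, hW]
  have hfin : Finite Q := Nat.finite_of_card_ne_zero (by omega)
  set vb : Q := QuotientGroup.mk v with hvb
  set wb : Q := QuotientGroup.mk w with hwb
  have hv1 : vb ≠ 1 := fun h => hv ((QuotientGroup.eq_one_iff v).mp h)
  have hw1 : wb ≠ 1 := fun h => hw ((QuotientGroup.eq_one_iff w).mp h)
  have hv3 : vb ^ 3 = 1 := by
    have : v ^ 3 = 1 := by rw [pow_succ, pow_two]; exact V3_cube v
    rw [hvb, ← QuotientGroup.mk_pow, this, QuotientGroup.mk_one]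
  have hord : orderOf vb = 3 := orderOf_eq_prime hv3 hv1
  have htop : Subgroup.zpowers vb = ⊤ := by
    apply Subgroup.eq_top_of_card_eq
    rw [Nat.card_zpowers, hord, hcard]
  have hmem : wb ∈ Subgroup.zpowers vb := htop ▸ Subgroup.mem_top wb
  obtain ⟨k, hk⟩ := hmem
  have hkey : vb ^ (k % 3) = wb := by
    rw [← hk]
    show vb ^ (k % 3) = vb ^ k
    conv_rhs => rw [← Int.emod_add_mul_ediv k 3]
    rw [zpow_add, zpow_mul]
    have hv3' : vb ^ (3:ℤ) = 1 := by
      rw [show (3:ℤ) = ((3:ℕ):ℤ) by norm_num, zpow_natCast, hv3]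
    rw [hv3', one_zpow, mul_one]
  have hr : k % 3 = 0 ∨ k % 3 = 1 ∨ k % 3 = 2 := by omega
  rcases hr with h0 | h1 | h2
  · rw [h0, zpow_zero] at hkey
    exact absurd hkey.symm hw1
  · left
    rw [h1, zpow_one] at hkey
    have : v⁻¹ * w ∈ W := (QuotientGroup.eq (s := W)).mp hkey
    rwa [mul_comm] at this
  · right
    rw [h2] at hkey
    have h2' : (v * v : V3 n) = ((v ^ (2:ℤ)) : V3 n) := by
      rw [show (2:ℤ) = ((2:ℕ):ℤ) by norm_num, zpow_natCast, pow_two]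
    have : (v * v)⁻¹ * w ∈ W := by
      apply (QuotientGroup.eq (s := W)).mp
      rw [h2', QuotientGroup.mk_zpow]; exact hkey
    have hinv : (v * v)⁻¹ = v := by
      rw [eq_comm, eq_inv_iff_mul_eq_one, ← mul_assoc]
      exact V3_cube v
    rwa [hinv, mul_comm] at this

theorem conj1 {n : ℕ} (u : V3 n) (g : V3 n ⋊[negAction n] Multiplicative (ZMod 2))
    (hb : Multiplicative.toAdd g.right = 1) :
    (⟨u, 1⟩ : V3 n ⋊[negAction n] Multiplicative (ZMod 2)) * g *
      (⟨u, 1⟩ : V3 n ⋊[negAction n] Multiplicative (ZMod 2))⁻¹ =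
      ⟨u * u * g.left, g.right⟩ := by
  ext : 1
  · simp only [SemidirectProduct.mul_left, SemidirectProduct.mul_right,
      SemidirectProduct.inv_left, SemidirectProduct.inv_right]
    rw [inv_one, one_mul, negAction_apply_zero (by simp), negAction_apply_one' hb,
      negAction_apply_zero (by simp), inv_inv]
    exact mul_right_comm u g.left u
  · simp only [SemidirectProduct.mul_right, SemidirectProduct.inv_right]
    rw [one_mul, inv_one, mul_one]

theorem conj2 {n : ℕ} (u : V3 n) (a : Multiplicative (ZMod 2))
    (ha : Multiplicative.toAdd a = 1)
    (g : V3 n ⋊[negAction n] Multiplicative (ZMod 2))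
    (hb : Multiplicative.toAdd g.right = 1) :
    (⟨u, a⟩ : V3 n ⋊[negAction n] Multiplicative (ZMod 2)) * g *
      (⟨u, a⟩ : V3 n ⋊[negAction n] Multiplicative (ZMod 2))⁻¹ =
      ⟨u * u * g.left⁻¹, g.right⟩ := by
  have hainv : Multiplicative.toAdd (a⁻¹) = 1 := by
    have : Multiplicative.toAdd (a⁻¹) = -Multiplicative.toAdd a := rfl
    rw [this, ha]; decide
  have hab : Multiplicative.toAdd (a * g.right) = 0 := by
    have : Multiplicative.toAdd (a * g.right)
        = Multiplicative.toAdd a + Multiplicative.toAdd g.right := rfl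
    rw [this, ha, hb]; decide
  ext : 1
  · show (u * negAction n a g.left) *
      negAction n (a * g.right) (negAction n a⁻¹ u⁻¹) = u * u * g.left⁻¹
    rw [negAction_apply_one' ha, negAction_apply_one' hainv, inv_inv,
      negAction_apply_zero hab]
    exact mul_right_comm u g.left⁻¹ u
  · show a * g.right * a⁻¹ = g.right
    apply Multiplicative.toAdd.injective
    show Multiplicative.toAdd a + Multiplicative.toAdd g.right + -Multiplicative.toAdd a
      = Multiplicative.toAdd g.right
    abel

/-- in `G = 3^n : 2` (the semidirect product `V ⋊ C₂` with `C₂` acting by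
negation on `V = (ℤ/3)^n`), the involutions are exactly the elements with nontrivial
`C₂`-component; and for any index-3 subgroup `W ≤ V`, the subgroup
`H = {(w, σ) : w ∈ W}` acts transitively by conjugation on the involutions outside `H`. -/
theorem three_power_two_very_regular (n : ℕ) (hn : 1 ≤ n) :
    (∀ g : V3 n ⋊[negAction n] Multiplicative (ZMod 2),
        (g * g = 1 ∧ g ≠ 1) ↔ g.right ≠ 1) ∧
      ∀ W : Subgroup (V3 n), W.index = 3 →
        ∀ t s : V3 n ⋊[negAction n] Multiplicative (ZMod 2),
          t * t = 1 → t ≠ 1 → s * s = 1 → s ≠ 1 →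
          t ∉ parab n W → s ∉ parab n W →
          ∃ h ∈ parab n W, h * t * h⁻¹ = s := by
  constructor
  · intro g
    constructor
    · rintro ⟨hgg, hg⟩ h1
      have := invol_right g hgg hg
      rw [h1] at this
      exact absurd this (by decide)
    · intro hr
      have hr' : Multiplicative.toAdd g.right = 1 := by
        rcases zmod2_cases (Multiplicative.toAdd g.right) with h0 | h1
        · exact absurd (Multiplicative.toAdd.injective (by simpa using h0)) hr
        · exact h1
      refine ⟨?_, fun h => hr (by rw [h]; rfl)⟩
      ext
      · rw [SemidirectProduct.mul_left, negAction_apply_one' hr']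
        simp
      · show g.right * g.right = 1
        apply Multiplicative.toAdd.injective
        show Multiplicative.toAdd g.right + Multiplicative.toAdd g.right
          = Multiplicative.toAdd (1 : Multiplicative (ZMod 2))
        rw [hr']; decide
  · intro W hW t s htt ht1 hss hs1 htH hsH
    have hv : t.left ∉ W := htH
    have hw : s.left ∉ W := hsH
    have htr : Multiplicative.toAdd t.right = 1 := invol_right t htt ht1
    have hsr : Multiplicative.toAdd s.right = 1 := invol_right s hss hs1
    have hrts : t.right = s.right := Multiplicative.toAdd.injective (by rw [htr, hsr])
    rcases coset_cases W hW t.left s.left hv hw with h1 | h2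
    · set c := s.left * t.left⁻¹ with hc
      refine ⟨⟨c * c, 1⟩, W.mul_mem h1 h1, ?_⟩
      rw [conj1 (c * c) t htr]
      ext : 1
      · show (c * c) * (c * c) * t.left = s.left
        rw [V3_sqrt, hc, inv_mul_cancel_right]
      · exact hrts
    · set c := s.left * t.left with hc
      refine ⟨⟨c * c, Multiplicative.ofAdd 1⟩, W.mul_mem h2 h2, ?_⟩
      rw [conj2 (c * c) (Multiplicative.ofAdd 1) rfl t htr]
      ext : 1
      · show (c * c) * (c * c) * t.left⁻¹ = s.left
        rw [V3_sqrt, hc, mul_inv_cancel_right]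
      · exact hrts
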